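/- Let $T$ be a tree, and $Y \subseteq V(T)$ a set of at most $m$ nodes that is closed under taking lowest common ancestors (with respect to a fixed root). Partition the connected components of $T - Y$ into regions, grouping components with the same set of neighbors in $Y$. Then every region has at most 2 neighbors in $Y$, and the number of regions is at most $2|Y|$. -/

import Mathlib

open Finset

/-- In the tree `T` rooted at `r`, `a` is an ancestor of `b` (i.e. `a` lies on the
unique path from `r` to `b`): every walk from `r` to `b` passes through `a`. -/
def Ancestor {V : Type*} (T : SimpleGraph V) (r a b : V) : Prop :=
  ∀ p : T.Walk r b, a ∈ p.support

/-- `l` is the lowest common ancestor of `u` and `v` in `T` rooted at `r`. -/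
def IsLCA {V : Type*} (T : SimpleGraph V) (r l u v : V) : Prop :=
  Ancestor T r l u ∧ Ancestor T r l v ∧
    ∀ a, Ancestor T r a u → Ancestor T r a v → Ancestor T r a l

/-- `x` and `y` are connected in `T - Y`: there is a walk avoiding `Y`. -/
def ReachOff {V : Type*} (T : SimpleGraph V) (Y : Set V) (x y : V) : Prop :=
  ∃ p : T.Walk x y, ∀ z ∈ p.support, z ∉ Y

/-- The neighborhood in `Y` of the component of `T - Y` containing `x`. -/
def compNbhd {V : Type*} (T : SimpleGraph V) (Y : Set V) (x : V) : Set V :=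
  {y ∈ Y | ∃ z, ReachOff T Y x z ∧ T.Adj z y}

open SimpleGraph Walk

section Aux
set_option linter.unusedSectionVars false
variable {V : Type*} [DecidableEq V] {T : SimpleGraph V}

lemma myIsPath_append {u v w : V} {p : T.Walk u v} {q : T.Walk v w}
    (hp : p.IsPath) (hq : q.IsPath) (h : ∀ z ∈ p.support, z ∈ q.support → z = v) :
    (p.append q).IsPath := by
  rw [Walk.isPath_def, Walk.support_append, List.nodup_append]
  refine ⟨hp.support_nodup, hq.support_nodup.tail, ?_⟩
  intro z hz z' hz' hzz
  subst hzz
  have hzq : z ∈ q.support := List.mem_of_mem_tail hz'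
  have hzv : z = v := h z hz hzq
  subst hzv
  have := hq.support_nodup
  rw [Walk.support_eq_cons] at this
  exact (List.nodup_cons.mp this).1 hz'

lemma myPath_append_sub {u v w : V} {p : T.Walk u v} {q : T.Walk v w}
    (h : (p.append q).IsPath) : ∀ z ∈ p.support, z ∈ q.support → z = v := by
  intro z hz hz'
  have hnd := h.support_nodup
  rw [Walk.support_append, List.nodup_append] at hnd
  by_contra hne
  have : z ∈ q.support.tail := by
    have := hz'
    rw [Walk.support_eq_cons] at this
    rcases List.mem_cons.mp this with h1 | h1
    · exact absurd h1 hne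
    · exact h1
  exact hnd.2.2 z hz z this rfl

noncomputable def thePath (hT : T.IsTree) (u v : V) : T.Walk u v :=
  (hT.existsUnique_path u v).choose

lemma thePath_isPath (hT : T.IsTree) (u v : V) : (thePath hT u v).IsPath :=
  (hT.existsUnique_path u v).choose_spec.1

lemma thePath_unique (hT : T.IsTree) {u v : V} {p : T.Walk u v} (hp : p.IsPath) :
    p = thePath hT u v :=
  (hT.existsUnique_path u v).choose_spec.2 p hp

lemma ancestor_iff (hT : T.IsTree) {r a b : V} :
    Ancestor T r a b ↔ a ∈ (thePath hT r b).support := by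
  constructor
  · exact fun h => h _
  · intro h p
    have hb : p.bypass = thePath hT r b := thePath_unique hT p.bypass_isPath
    exact Walk.support_bypass_subset p (by rw [hb]; exact h)

lemma ancestor_refl {r b : V} : Ancestor T r b b := fun p => p.end_mem_support

lemma ancestor_trans {r a b c : V} (h1 : Ancestor T r a b) (h2 : Ancestor T r b c) :
    Ancestor T r a c :=
  fun p => (p.support_takeUntil_subset (h2 p)) (h1 (p.takeUntil b (h2 p)))

lemma ancestor_antisymm (hT : T.IsTree) {r a b : V}
    (h1 : Ancestor T r a b) (h2 : Ancestor T r b a) : a = b := by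
  have ha : a ∈ (thePath hT r b).support := h1 _
  have hb : b ∈ ((thePath hT r b).takeUntil a ha).support := h2 _
  by_contra hne
  have hnd := (thePath_isPath hT r b).support_nodup
  rw [← Walk.take_spec (thePath hT r b) ha, Walk.support_append, List.nodup_append] at hnd
  have hbd : b ∈ ((thePath hT r b).dropUntil a ha).support.tail := by
    have h := Walk.end_mem_support ((thePath hT r b).dropUntil a ha)
    rw [Walk.support_eq_cons] at h
    rcases List.mem_cons.mp h with h1' | h1'
    · exact absurd h1'.symm hne
    · exact h1'
  exact hnd.2.2 b hb b hbd rfl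

/-- first vertex of a walk belonging to `S`, as a prefix decomposition -/
lemma exists_prefix_first {u v : V} (p : T.Walk u v) (S : Set V) (hv : v ∈ S) :
    ∃ (l : V) (q : T.Walk u l) (rest : T.Walk l v),
      p = q.append rest ∧ l ∈ S ∧ ∀ z ∈ q.support, z ∈ S → z = l := by
  induction p with
  | nil =>
    exact ⟨_, Walk.nil, Walk.nil, rfl, hv, fun z hz _ => by simpa using hz⟩
  | @cons a b c h q ih =>
    by_cases hu : a ∈ S
    · exact ⟨a, Walk.nil, Walk.cons h q, rfl, hu, fun z hz _ => by simpa using hz⟩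
    · obtain ⟨l, q', rest, hq, hlS, hfirst⟩ := ih hv
      refine ⟨l, Walk.cons h q', rest, by rw [Walk.cons_append, ← hq], hlS, ?_⟩
      intro z hz hzS
      rw [Walk.support_cons] at hz
      rcases List.mem_cons.mp hz with rfl | hz'
      · exact absurd hzS hu
      · exact hfirst z hz' hzS

lemma exists_isLCA (hT : T.IsTree) (r u v : V) :
    ∃ l, IsLCA T r l u v ∧ l ∈ (thePath hT u v).support := by
  obtain ⟨l, A, B, hR, hlS, hfirst⟩ := exists_prefix_first (thePath hT u v)
    {z | z ∈ (thePath hT r v).support} (Walk.end_mem_support _)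
  have hlPv : l ∈ (thePath hT r v).support := hlS
  have hA : A.IsPath := by
    have := thePath_isPath hT u v
    rw [hR] at this
    exact this.of_append_left
  have hW : (((thePath hT r v).takeUntil l hlPv).append A.reverse).IsPath := by
    refine myIsPath_append ((thePath_isPath hT r v).takeUntil hlPv) hA.reverse ?_
    intro z hz hz'
    have hzA : z ∈ A.support := by
      rw [Walk.support_reverse] at hz'
      exact List.mem_reverse.mp hz'
    exact hfirst z hzA ((thePath hT r v).support_takeUntil_subset hlPv hz)
  have hWru : ((thePath hT r v).takeUntil l hlPv).append A.reverse = thePath hT r u :=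
    thePath_unique hT hW
  have hanc_lu : Ancestor T r l u := by
    rw [ancestor_iff hT, ← hWru]
    exact (Walk.mem_support_append_iff _ _).mpr (Or.inl (Walk.end_mem_support _))
  have hanc_lv : Ancestor T r l v := (ancestor_iff hT).mpr hlPv
  refine ⟨l, ⟨hanc_lu, hanc_lv, ?_⟩, ?_⟩
  · intro a hau hav
    have htake : (thePath hT r v).takeUntil l hlPv = thePath hT r l :=
      thePath_unique hT ((thePath_isPath hT r v).takeUntil hlPv)
    rw [ancestor_iff hT, ← htake]
    have hau' : a ∈ (((thePath hT r v).takeUntil l hlPv).append A.reverse).support :=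
      hau _
    rcases (Walk.mem_support_append_iff _ _).mp hau' with h | h
    · exact h
    · have hzA : a ∈ A.support := by
        rw [Walk.support_reverse] at h
        exact List.mem_reverse.mp h
      have : a = l := hfirst a hzA (hav _)
      rw [this]
      exact Walk.end_mem_support _
  · rw [hR]
    exact (Walk.mem_support_append_iff _ _).mpr (Or.inl (Walk.end_mem_support _))

lemma ancestor_mem_path (hT : T.IsTree) {r a b c : V}
    (h1 : Ancestor T r a b) (h2 : Ancestor T r b c) :
    b ∈ (thePath hT a c).support := by
  have hac : Ancestor T r a c := ancestor_trans h1 h2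
  have haQ : a ∈ (thePath hT r c).support := hac _
  have hdrop : (thePath hT r c).dropUntil a haQ = thePath hT a c :=
    thePath_unique hT ((thePath_isPath hT r c).dropUntil haQ)
  have hbQ : b ∈ (thePath hT r c).support := h2 _
  rw [← Walk.take_spec (thePath hT r c) haQ, Walk.mem_support_append_iff] at hbQ
  rcases hbQ with h | h
  · have hba : Ancestor T r b a := by
      rw [ancestor_iff hT, ← thePath_unique hT ((thePath_isPath hT r c).takeUntil haQ)]
      exact h
    have hab : a = b := ancestor_antisymm hT h1 hba
    rw [← hdrop, ← hab]
    exact Walk.start_mem_support _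
  · rw [← hdrop]
    exact h

end Aux
section Aux2
set_option linter.unusedSectionVars false
variable {V : Type*} [DecidableEq V] {T : SimpleGraph V} {Y : Set V}

lemma reachOff_symm {x y : V} (h : ReachOff T Y x y) : ReachOff T Y y x := by
  obtain ⟨p, hp⟩ := h
  refine ⟨p.reverse, fun z hz => ?_⟩
  rw [Walk.support_reverse, List.mem_reverse] at hz
  exact hp z hz

lemma reachOff_trans {x y z : V} (h1 : ReachOff T Y x y) (h2 : ReachOff T Y y z) :
    ReachOff T Y x z := by
  obtain ⟨p, hp⟩ := h1
  obtain ⟨q, hq⟩ := h2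
  refine ⟨p.append q, fun w hw => ?_⟩
  rcases (Walk.mem_support_append_iff _ _).mp hw with h | h
  · exact hp w h
  · exact hq w h

lemma compNbhd_congr {x x' : V} (h : ReachOff T Y x x') :
    compNbhd T Y x = compNbhd T Y x' := by
  ext y
  constructor
  · rintro ⟨hy, z, hz, hadj⟩
    exact ⟨hy, z, reachOff_trans (reachOff_symm h) hz, hadj⟩
  · rintro ⟨hy, z, hz, hadj⟩
    exact ⟨hy, z, reachOff_trans h hz, hadj⟩

lemma mem_compNbhd {x y : V} :
    y ∈ compNbhd T Y x ↔ y ∈ Y ∧ ∃ z, ReachOff T Y x z ∧ T.Adj z y := Iff.rfl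

lemma path_support_sub (hT : T.IsTree) {x y1 y2 : V}
    (h1 : y1 ∈ compNbhd T Y x) (h2 : y2 ∈ compNbhd T Y x) :
    ∀ z ∈ (thePath hT y1 y2).support, z = y1 ∨ z = y2 ∨ (z ∉ Y ∧ ReachOff T Y x z) := by
  obtain ⟨hy1, z1, hr1, ha1⟩ := h1
  obtain ⟨hy2, z2, hr2, ha2⟩ := h2
  obtain ⟨w, hw⟩ := reachOff_trans (reachOff_symm hr1) hr2
  have hbp : (Walk.cons ha1.symm (w.concat ha2)).bypass = thePath hT y1 y2 :=
    thePath_unique hT (Walk.bypass_isPath _)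
  intro z hz
  rw [← hbp] at hz
  have hzW : z ∈ (Walk.cons ha1.symm (w.concat ha2)).support :=
    Walk.support_bypass_subset _ hz
  rw [Walk.support_cons] at hzW
  rcases List.mem_cons.mp hzW with rfl | hz'
  · exact Or.inl rfl
  · rw [Walk.support_concat, List.mem_append, List.mem_singleton] at hz'
    rcases hz' with hz' | rfl
    · refine Or.inr (Or.inr ⟨hw z hz', ?_⟩)
      exact reachOff_trans hr1
        ⟨w.takeUntil z hz', fun t ht => hw t (w.support_takeUntil_subset hz' ht)⟩
    · exact Or.inr (Or.inl rfl)

lemma compNbhd_nonempty (hT : T.IsTree) (hY : Y.Nonempty) {x : V} (hx : x ∉ Y) :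
    (compNbhd T Y x).Nonempty := by
  obtain ⟨y0, hy0⟩ := hY
  obtain ⟨l, q, rest, hp, hlY, hfirst⟩ := exists_prefix_first (thePath hT x y0) Y hy0
  have hq : q.IsPath := by
    have := thePath_isPath hT x y0
    rw [hp] at this
    exact this.of_append_left
  have hxl : x ≠ l := fun h => hx (h ▸ hlY)
  have hnil : ¬ q.reverse.Nil := by
    intro h
    rw [Walk.nil_iff_length_eq, Walk.length_reverse] at h
    exact hxl (Walk.eq_of_length_eq_zero h)
  obtain ⟨c, hadj, t, ht⟩ := Walk.not_nil_iff.mp hnil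
  have htY : ∀ z ∈ t.support, z ∉ Y := by
    intro z hz hzY
    have hzq : z ∈ q.support := by
      have h2 : z ∈ q.reverse.support := by
        rw [ht, Walk.support_cons]
        exact List.mem_cons_of_mem _ hz
      rwa [Walk.support_reverse, List.mem_reverse] at h2
    have hzl : z = l := hfirst z hzq hzY
    subst hzl
    have hqr : q.reverse.IsPath := hq.reverse
    rw [ht] at hqr
    have := hqr.support_nodup
    rw [Walk.support_cons] at this
    exact (List.nodup_cons.mp this).1 hz
  refine ⟨l, hlY, c, ⟨t.reverse, fun z hz => ?_⟩, hadj.symm⟩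
  rw [Walk.support_reverse, List.mem_reverse] at hz
  exact htY z hz

lemma nbhd_comparable (hT : T.IsTree) {r : V}
    (hclosed : ∀ u ∈ Y, ∀ v ∈ Y, ∀ l, IsLCA T r l u v → l ∈ Y)
    {x y1 y2 : V} (h1 : y1 ∈ compNbhd T Y x) (h2 : y2 ∈ compNbhd T Y x) :
    Ancestor T r y1 y2 ∨ Ancestor T r y2 y1 := by
  obtain ⟨l, hlca, hlsupp⟩ := exists_isLCA hT r y1 y2
  have hlY : l ∈ Y := hclosed y1 h1.1 y2 h2.1 l hlca
  rcases path_support_sub hT h1 h2 l hlsupp with rfl | rfl | ⟨hnY, _⟩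
  · exact Or.inl hlca.2.1
  · exact Or.inr hlca.1
  · exact absurd hlY hnY

lemma not_middle (hT : T.IsTree) {r x p q m : V}
    (hp : p ∈ compNbhd T Y x) (hq : q ∈ compNbhd T Y x) (hmY : m ∈ Y)
    (h1 : Ancestor T r p m) (h2 : Ancestor T r m q)
    (hne1 : m ≠ p) (hne2 : m ≠ q) : False := by
  have hm := ancestor_mem_path hT h1 h2
  rcases path_support_sub hT hp hq m hm with h | h | ⟨h, _⟩
  · exact hne1 h
  · exact hne2 h
  · exact h hmY

lemma compNbhd_ncard_le (hT : T.IsTree) {r : V}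
    (hclosed : ∀ u ∈ Y, ∀ v ∈ Y, ∀ l, IsLCA T r l u v → l ∈ Y)
    [Fintype V] (x : V) : (compNbhd T Y x).ncard ≤ 2 := by
  by_contra h
  push_neg at h
  obtain ⟨a, ha, b, hb, c, hc, hab, hac, hbc⟩ :=
    (Set.two_lt_ncard (Set.toFinite _)).mp h
  have haY : a ∈ Y := ha.1
  have hbY : b ∈ Y := hb.1
  have hcY : c ∈ Y := hc.1
  rcases nbhd_comparable hT hclosed ha hb with h1 | h1 <;>
    rcases nbhd_comparable hT hclosed hb hc with h2 | h2 <;>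
      rcases nbhd_comparable hT hclosed ha hc with h3 | h3
  · exact not_middle hT ha hc hbY h1 h2 hab.symm hbc
  · exact not_middle hT ha hc hbY h1 h2 hab.symm hbc
  · exact not_middle hT ha hb hcY h3 h2 hac.symm hbc.symm
  · exact not_middle hT hc hb haY h3 h1 hac hab
  · exact not_middle hT hb hc haY h1 h3 hab hac
  · exact not_middle hT hb ha hcY h2 h3 hbc.symm hac.symm
  · exact not_middle hT hc ha hbY h2 h1 hbc hab.symm
  · exact not_middle hT hc ha hbY h2 h1 hbc hab.symm
end Aux2
section Aux3
set_option linter.unusedSectionVars false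
variable {V : Type*} [DecidableEq V] {T : SimpleGraph V} {Y : Set V}

/-- the neighbor of `b` towards the root along the canonical path -/
noncomputable def par (hT : T.IsTree) (r b : V) : V :=
  ((thePath hT r b).reverse).getVert 1

lemma par_spec (hT : T.IsTree) {r x a b : V}
    (ha : a ∈ compNbhd T Y x) (hb : b ∈ compNbhd T Y x)
    (hanc : Ancestor T r a b) (hne : a ≠ b) :
    par hT r b = a ∨ (par hT r b ∉ Y ∧ ReachOff T Y x (par hT r b)) := by
  have haQ : a ∈ (thePath hT r b).support := hanc _
  have hdp : ((thePath hT r b).dropUntil a haQ).IsPath :=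
    (thePath_isPath hT r b).dropUntil haQ
  have hnil : ¬ ((thePath hT r b).dropUntil a haQ).reverse.Nil := by
    intro h
    rw [Walk.nil_iff_length_eq, Walk.length_reverse] at h
    exact hne (Walk.eq_of_length_eq_zero h)
  obtain ⟨c, hadj, t, ht⟩ := Walk.not_nil_iff.mp hnil
  have hpar : par hT r b = c := by
    have h1 : (thePath hT r b).reverse =
        ((thePath hT r b).dropUntil a haQ).reverse.append
          ((thePath hT r b).takeUntil a haQ).reverse := by
      rw [← Walk.reverse_append, Walk.take_spec]
    show ((thePath hT r b).reverse).getVert 1 = c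
    rw [h1, ht, Walk.cons_append, Walk.getVert_cons_succ, Walk.getVert_zero]
  have hcD : c ∈ ((thePath hT r b).dropUntil a haQ).support := by
    have h2 : c ∈ ((thePath hT r b).dropUntil a haQ).reverse.support := by
      rw [ht, Walk.support_cons]
      exact List.mem_cons_of_mem _ t.start_mem_support
    rwa [Walk.support_reverse, List.mem_reverse] at h2
  have hDP : (thePath hT r b).dropUntil a haQ = thePath hT a b := thePath_unique hT hdp
  have hcb : c ≠ b := by
    intro h
    subst h
    have hqr := hdp.reverse
    rw [ht] at hqr
    have := hqr.support_nodup
    rw [Walk.support_cons] at this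
    exact (List.nodup_cons.mp this).1 t.start_mem_support
  rcases path_support_sub hT ha hb c (by rw [← hDP]; exact hcD) with h | h | h
  · left; rw [hpar, h]
  · exact absurd h hcb
  · right; rw [hpar]; exact h

open Classical in
/-- the deepest element of a neighborhood -/
noncomputable def deep (T : SimpleGraph V) (r : V) (N : Set V) : V :=
  if h : ∃ b ∈ N, ∀ a ∈ N, Ancestor T r a b then h.choose else r

lemma deep_spec {r : V} {N : Set V} (h : ∃ b ∈ N, ∀ a ∈ N, Ancestor T r a b) :
    deep T r N ∈ N ∧ ∀ a ∈ N, Ancestor T r a (deep T r N) := by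
  simp only [deep, dif_pos h]
  exact ⟨h.choose_spec.1, h.choose_spec.2⟩

lemma deep_singleton (r y : V) : deep T r ({y} : Set V) = y := by
  have h : ∃ b ∈ ({y} : Set V), ∀ a ∈ ({y} : Set V), Ancestor T r a b :=
    ⟨y, rfl, fun a ha => by rw [Set.mem_singleton_iff] at ha; subst ha; exact ancestor_refl⟩
  have := (deep_spec h).1
  rwa [Set.mem_singleton_iff] at this

lemma deep_pair (hT : T.IsTree) {r a b : V} (hanc : Ancestor T r a b) (hne : a ≠ b) :
    deep T r ({a, b} : Set V) = b := by
  have h : ∃ d ∈ ({a, b} : Set V), ∀ z ∈ ({a, b} : Set V), Ancestor T r z d := by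
    refine ⟨b, Or.inr rfl, fun z hz => ?_⟩
    rcases hz with rfl | rfl
    · exact hanc
    · exact ancestor_refl
  obtain ⟨hmem, hall⟩ := deep_spec h
  rcases hmem with h1 | h1
  · exfalso
    have hba : Ancestor T r b a := h1 ▸ hall b (Or.inr rfl)
    exact hne (ancestor_antisymm hT hanc hba)
  · exact h1

end Aux3

theorem stmt13 {V : Type*} [Fintype V] [DecidableEq V]
    (T : SimpleGraph V) (hT : T.IsTree) (r : V)
    (Y : Set V) (hY : Y.Nonempty)
    (hclosed : ∀ u ∈ Y, ∀ v ∈ Y, ∀ l, IsLCA T r l u v → l ∈ Y) :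
    -- every region has at most two neighbors in `Y`:
    (∀ x, x ∉ Y → (compNbhd T Y x).ncard ≤ 2) ∧
    -- the number of regions (distinct neighborhoods of components) is at most `2 |Y|`:
    {N : Set V | ∃ x, x ∉ Y ∧ N = compNbhd T Y x}.ncard ≤ 2 * Y.ncard := by
  constructor
  · intro x _
    exact compNbhd_ncard_le hT hclosed x
  · set 𝒩 := {N : Set V | ∃ x, x ∉ Y ∧ N = compNbhd T Y x} with h𝒩
    set 𝒩₁ := {N : Set V | N ∈ 𝒩 ∧ N.ncard = 1} with h𝒩₁
    set 𝒩₂ := {N : Set V | N ∈ 𝒩 ∧ N.ncard = 2} with h𝒩₂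
    -- structure of elements of 𝒩₂
    have pair_struct : ∀ N ∈ 𝒩₂, ∃ a b x, x ∉ Y ∧ N = compNbhd T Y x ∧
        N = {a, b} ∧ a ≠ b ∧ Ancestor T r a b ∧ deep T r N = b := by
      rintro N ⟨⟨x, hx, rfl⟩, hcard⟩
      obtain ⟨a, b, hab, hset⟩ := Set.ncard_eq_two.mp hcard
      have haN : a ∈ compNbhd T Y x := by rw [hset]; exact Or.inl rfl
      have hbN : b ∈ compNbhd T Y x := by rw [hset]; exact Or.inr rfl
      rcases nbhd_comparable hT hclosed haN hbN with h | h
      · exact ⟨a, b, x, hx, rfl, hset, hab, h, by rw [hset]; exact deep_pair hT h hab⟩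
      · refine ⟨b, a, x, hx, rfl, by rw [hset, Set.pair_comm], hab.symm, h, ?_⟩
        rw [hset, Set.pair_comm]
        exact deep_pair hT h hab.symm
    have h1 : 𝒩₁.ncard ≤ Y.ncard := by
      refine Set.ncard_le_ncard_of_injOn (deep T r) ?_ ?_ (Set.toFinite _)
      · rintro N ⟨⟨x, hx, rfl⟩, hcard⟩
        obtain ⟨y, hy⟩ := Set.ncard_eq_one.mp hcard
        rw [hy, deep_singleton]
        have : y ∈ compNbhd T Y x := by rw [hy]; exact rfl
        exact this.1
      · rintro N ⟨⟨x, hx, rfl⟩, hcard⟩ N' ⟨⟨x', hx', rfl⟩, hcard'⟩ heq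
        obtain ⟨y, hy⟩ := Set.ncard_eq_one.mp hcard
        obtain ⟨y', hy'⟩ := Set.ncard_eq_one.mp hcard'
        rw [hy, hy', deep_singleton, deep_singleton] at heq
        rw [hy, hy', heq]
    have h2 : 𝒩₂.ncard ≤ Y.ncard := by
      refine Set.ncard_le_ncard_of_injOn (deep T r) ?_ ?_ (Set.toFinite _)
      · intro N hN
        obtain ⟨a, b, x, hx, hNx, hset, hab, hanc, hdeep⟩ := pair_struct N hN
        rw [hdeep]
        have : b ∈ compNbhd T Y x := by rw [← hNx, hset]; exact Or.inr rfl
        exact this.1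
      · intro N hN N' hN' heq
        obtain ⟨a, b, x, hx, hNx, hset, hab, hanc, hdeep⟩ := pair_struct N hN
        obtain ⟨a', b', x', hx', hNx', hset', hab', hanc', hdeep'⟩ := pair_struct N' hN'
        rw [hdeep, hdeep'] at heq
        subst heq
        have haN : a ∈ compNbhd T Y x := by rw [← hNx, hset]; exact Or.inl rfl
        have hbN : b ∈ compNbhd T Y x := by rw [← hNx, hset]; exact Or.inr rfl
        have haN' : a' ∈ compNbhd T Y x' := by rw [← hNx', hset']; exact Or.inl rfl
        have hbN' : b ∈ compNbhd T Y x' := by rw [← hNx', hset']; exact Or.inr rfl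
        rcases par_spec hT haN hbN hanc hab with hp | hp <;>
          rcases par_spec hT haN' hbN' hanc' hab' with hp' | hp'
        · rw [hset, hset', ← hp, ← hp']
        · exact absurd (hp ▸ haN.1) hp'.1
        · exact absurd (hp' ▸ haN'.1) hp.1
        · have hxx' : ReachOff T Y x x' := reachOff_trans hp.2 (reachOff_symm hp'.2)
          rw [hNx, hNx', compNbhd_congr hxx']
    have hsub : 𝒩 = 𝒩₁ ∪ 𝒩₂ := by
      ext N
      constructor
      · intro hN
        obtain ⟨x, hx, rfl⟩ := hN
        have hle : (compNbhd T Y x).ncard ≤ 2 := compNbhd_ncard_le hT hclosed x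
        have hpos : 0 < (compNbhd T Y x).ncard :=
          (Set.ncard_pos (Set.toFinite _)).mpr (compNbhd_nonempty hT hY hx)
        have : (compNbhd T Y x).ncard = 1 ∨ (compNbhd T Y x).ncard = 2 := by omega
        rcases this with h | h
        · exact Or.inl ⟨⟨x, hx, rfl⟩, h⟩
        · exact Or.inr ⟨⟨x, hx, rfl⟩, h⟩
      · rintro (⟨hN, _⟩ | ⟨hN, _⟩) <;> exact hN
    calc 𝒩.ncard = (𝒩₁ ∪ 𝒩₂).ncard := by rw [← hsub]
      _ ≤ 𝒩₁.ncard + 𝒩₂.ncard := Set.ncard_union_le _ _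
      _ ≤ Y.ncard + Y.ncard := Nat.add_le_add h1 h2
      _ = 2 * Y.ncard := by ring
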